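/- Let b > 1, x > 0, c ≥ 0, k ≥ 2, and suppose (y₁,…,y_k) are nonnegative reals summing to x such that all perceived costs b·y_i + ∑_{j>i} y_j + c are equal to some common value P. Then P = x/(1 - ((b-1)/b)^k) + c and y₁ = x·(b-1)^{k-1}/(b^k - (b-1)^k). -/

import Mathlib

open Finset

theorem stmt_16 (b x c : ℝ) (hb : 1 < b) (hx : 0 < x) (hc : 0 ≤ c)
    (k : ℕ) (hk : 2 ≤ k)
    (y : ℕ → ℝ) (hy : ∀ i ∈ Finset.Icc 1 k, 0 ≤ y i)
    (hsum : ∑ i ∈ Finset.Icc 1 k, y i = x)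
    (P : ℝ)
    (heq : ∀ i ∈ Finset.Icc 1 k,
      b * y i + (∑ j ∈ Finset.Icc (i + 1) k, y j) + c = P) :
    P = x / (1 - ((b - 1) / b) ^ k) + c ∧
    y 1 = x * (b - 1) ^ (k - 1) / (b ^ k - (b - 1) ^ k) := by
  obtain ⟨m, rfl⟩ : ∃ m, k = m + 1 := ⟨k - 1, by omega⟩
  have hm1 : 1 ≤ m := by omega
  have hb0 : (0:ℝ) < b := by linarith
  have hb1 : (0:ℝ) < b - 1 := by linarith
  set t : ℝ := b / (b - 1) with htdef
  have ht1 : 1 < t := (one_lt_div hb1).2 (by linarith)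
  -- recurrence
  have hrec : ∀ i, 1 ≤ i → i + 1 ≤ m + 1 → y (i+1) = t * y i := by
    intro i h1 h2
    have e1 := heq i (mem_Icc.mpr ⟨h1, by omega⟩)
    have e2 := heq (i+1) (mem_Icc.mpr ⟨by omega, h2⟩)
    have hsplit : ∑ j ∈ Icc (i+1) (m+1), y j
        = y (i+1) + ∑ j ∈ Icc (i+2) (m+1), y j := by
      rw [show Icc (i+2) (m+1) = Ioc (i+1) (m+1) from Finset.Icc_add_one_left_eq_Ioc _ _,
        ← Finset.Ioc_insert_left h2, Finset.sum_insert (by simp)]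
    rw [hsplit] at e1
    have h3 : (b - 1) * y (i+1) = b * y i := by linarith
    rw [htdef]
    field_simp
    linarith
  -- closed form
  have hform : ∀ i, 1 ≤ i → i ≤ m + 1 → y i = y 1 * t ^ (i - 1) := by
    intro i h1 h2
    induction i with
    | zero => omega
    | succ n ih =>
      rcases Nat.eq_or_lt_of_le h1 with h | h
      · simp [← h]
      · have hn1 : 1 ≤ n := by omega
        rw [hrec n hn1 (by omega), ih hn1 (by omega),
          show n + 1 - 1 = n - 1 + 1 by omega, pow_succ]
        ring
  -- sum
  have hx1 : y 1 * ((t ^ (m+1) - 1) / (t - 1)) = x := by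
    rw [← hsum, show Icc 1 (m+1) = Ico 1 (m+2) from (Finset.Ico_add_one_right_eq_Icc _ _).symm,
      Finset.sum_Ico_eq_sum_range]
    have hcg : ∀ i ∈ Finset.range (m + 2 - 1), y (1 + i) = y 1 * t ^ i := by
      intro i hi
      rw [hform (1 + i) (by omega) (by simp at hi; omega), show 1 + i - 1 = i by omega]
    rw [Finset.sum_congr rfl hcg, ← Finset.mul_sum,
      geom_sum_eq (ne_of_gt ht1), show m + 2 - 1 = m + 1 from rfl]
  have h1 : y 1 * (t ^ (m+1) - 1) = x * (t - 1) := by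
    have ht0 : t - 1 ≠ 0 := by linarith
    field_simp at hx1
    linarith
  have hkey : y 1 * (b ^ (m+1) - (b-1) ^ (m+1)) = x * (b-1) ^ m := by
    rw [htdef, div_pow] at h1
    have hne : b - 1 ≠ 0 := hb1.ne'
    field_simp at h1
    refine mul_right_cancel₀ (b := b - 1) (by positivity) ?_
    linear_combination h1
  have hd : (0:ℝ) < b ^ (m+1) - (b-1) ^ (m+1) := by
    have := pow_lt_pow_left₀ (show b - 1 < b by linarith) hb1.le
      (show m + 1 ≠ 0 by omega)
    linarith
  constructor
  · -- P
    have e := heq (m+1) (mem_Icc.mpr ⟨by omega, le_refl _⟩)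
    rw [show Icc (m+1+1) (m+1) = ∅ by simp, Finset.sum_empty] at e
    rw [hform (m+1) (by omega) le_rfl, show m + 1 - 1 = m from rfl] at e
    have hden : 1 - ((b-1)/b) ^ (m+1) ≠ 0 := by
      have h01 : ((b-1)/b) ^ (m+1) < 1 :=
        pow_lt_one₀ (by positivity) ((div_lt_one hb0).2 (by linarith))
          (show m + 1 ≠ 0 by omega)
      linarith
    rw [← e, htdef]
    have hgoal : b * (y 1 * (b / (b-1)) ^ m) = x / (1 - ((b-1)/b) ^ (m+1)) := by
      rw [eq_div_iff hden, div_pow, div_pow]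
      have hne : b - 1 ≠ 0 := hb1.ne'
      have hb0' : b ≠ 0 := hb0.ne'
      field_simp
      linear_combination b ^ (m+1) * hkey
    linarith
  · rw [show m + 1 - 1 = m from rfl, eq_div_iff hd.ne']
    linear_combination hkey
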